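/- For a Fock-space construction F with natural transformation η_A : A → FA, Δ̄_A ∘ a⁺ = ((a⁺ ⊗ id_{FA}) + (id_{FA} ⊗ a⁺) ∘ (σ_{A,FA} ⊗ id_{FA})) ∘ (id_A ⊗ Δ̄_A) : A ⊗ FA → FA ⊗ FA, where a⁺ = ∇̄_A ∘ (η_A ⊗ id_{FA}). -/

import Mathlib

open CategoryTheory CategoryTheory.Limits CategoryTheory.MonoidalCategory ZeroObject

universe v u

variable (C : Type u) [Category.{v} C] [HasZeroObject C] [HasZeroMorphisms C]
  [HasBinaryBiproducts C] [MonoidalCategory C] [SymmetricCategory C]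

/-- The diagonal `Δ_A = ⟨id, id⟩ : A ⟶ A ⊞ A`. -/
noncomputable abbrev bdiag (A : C) : A ⟶ A ⊞ A := biprod.lift (𝟙 A) (𝟙 A)

/-- The codiagonal `∇_A = [id, id] : A ⊞ A ⟶ A`. -/
noncomputable abbrev bcodiag (A : C) : A ⊞ A ⟶ A := biprod.desc (𝟙 A) (𝟙 A)

variable {C}

/-- Convolution addition of morphisms induced by the biproduct structure:
`f + g = ∇_B ∘ (f ⊞ g) ∘ Δ_A`. -/
noncomputable def cadd {A B : C} (f g : A ⟶ B) : A ⟶ B :=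
  bdiag C A ≫ biprod.map f g ≫ bcodiag C B

variable (C)

/-- Compatibility of the biproduct structure and the symmetric monoidal
structure: the tensor product is bilinear for the biproduct (convolution)
enrichment.  A category carrying both compatible structures is a category of
spaces and linear maps. -/
class TensorCompatible : Prop where
  zero_tensorHom : ∀ {A B X Y : C} (f : X ⟶ Y), (0 : A ⟶ B) ⊗ₘ f = 0
  tensorHom_zero : ∀ {A B X Y : C} (f : X ⟶ Y), f ⊗ₘ (0 : A ⟶ B) = 0
  cadd_tensorHom : ∀ {A B X Y : C} (f g : A ⟶ B) (h : X ⟶ Y),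
    cadd f g ⊗ₘ h = cadd (f ⊗ₘ h) (g ⊗ₘ h)
  tensorHom_cadd : ∀ {A B X Y : C} (f g : A ⟶ B) (h : X ⟶ Y),
    h ⊗ₘ cadd f g = cadd (h ⊗ₘ f) (h ⊗ₘ g)

/-- A (bosonic) Fock-space construction on a category of spaces and linear
maps: a strong symmetric monoidal functor from the biproduct monoidal
structure `(0, ⊞)` to the symmetric monoidal structure `(𝟙_ C, ⊗)`. -/
structure FockConstruction where
  /-- The underlying functor. -/
  F : C ⥤ C
  /-- The unit comparison isomorphism `I ≅ F 0`. -/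
  φ₀ : 𝟙_ C ≅ F.obj (0 : C)
  /-- The tensor comparison isomorphism `F A ⊗ F B ≅ F (A ⊞ B)`. -/
  φ : ∀ A B : C, F.obj A ⊗ F.obj B ≅ F.obj (A ⊞ B)
  φ_natural : ∀ {A B A' B' : C} (f : A ⟶ A') (g : B ⟶ B'),
    (F.map f ⊗ₘ F.map g) ≫ (φ A' B').hom = (φ A B).hom ≫ F.map (biprod.map f g)
  left_unitality : ∀ A : C,
    (φ₀.hom ⊗ₘ 𝟙 (F.obj A)) ≫ (φ 0 A).hom ≫ F.map (biprod.desc 0 (𝟙 A)) =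
      (λ_ (F.obj A)).hom
  right_unitality : ∀ A : C,
    (𝟙 (F.obj A) ⊗ₘ φ₀.hom) ≫ (φ A 0).hom ≫ F.map (biprod.desc (𝟙 A) 0) =
      (ρ_ (F.obj A)).hom
  associativity : ∀ A B D : C,
    ((φ A B).hom ⊗ₘ 𝟙 (F.obj D)) ≫ (φ (A ⊞ B) D).hom ≫
        F.map (biprod.associator A B D).hom =
      (α_ (F.obj A) (F.obj B) (F.obj D)).hom ≫
        (𝟙 (F.obj A) ⊗ₘ (φ B D).hom) ≫ (φ A (B ⊞ D)).hom
  braided : ∀ A B : C,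
    (φ A B).hom ≫ F.map (biprod.braiding A B).hom =
      (β_ (F.obj A) (F.obj B)).hom ≫ (φ B A).hom

namespace FockConstruction

variable {C} (Φ : FockConstruction C)

/-- The unit `η̄_A : I ⟶ F A` of the Fock bialgebra. -/
noncomputable def unit (A : C) : 𝟙_ C ⟶ Φ.F.obj A :=
  Φ.φ₀.hom ≫ Φ.F.map (0 : (0 : C) ⟶ A)

/-- The multiplication `∇̄_A : F A ⊗ F A ⟶ F A` of the Fock bialgebra. -/
noncomputable def mult (A : C) : Φ.F.obj A ⊗ Φ.F.obj A ⟶ Φ.F.obj A :=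
  (Φ.φ A A).hom ≫ Φ.F.map (bcodiag C A)

/-- The counit `ε̄_A : F A ⟶ I` of the Fock bialgebra. -/
noncomputable def counit (A : C) : Φ.F.obj A ⟶ 𝟙_ C :=
  Φ.F.map (0 : A ⟶ (0 : C)) ≫ Φ.φ₀.inv

/-- The comultiplication `Δ̄_A : F A ⟶ F A ⊗ F A` of the Fock bialgebra. -/
noncomputable def comult (A : C) : Φ.F.obj A ⟶ Φ.F.obj A ⊗ Φ.F.obj A :=
  Φ.F.map (bdiag C A) ≫ (Φ.φ A A).inv

/-- The creation operator `a⁺ = ∇̄_A ∘ (η_A ⊗ id) : A ⊗ F A ⟶ F A` associated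
to a natural transformation `η : Id ⟶ F`. -/
noncomputable def creation (η : 𝟭 C ⟶ Φ.F) (A : C) : A ⊗ Φ.F.obj A ⟶ Φ.F.obj A :=
  (η.app A ⊗ₘ 𝟙 (Φ.F.obj A)) ≫ Φ.mult A

/-- The annihilation operator `a⁻ = (ε_A ⊗ id) ∘ Δ̄_A : F A ⟶ A ⊗ F A`
associated to a natural transformation `ε : F ⟶ Id`. -/
noncomputable def annihilation (ε : Φ.F ⟶ 𝟭 C) (A : C) :
    Φ.F.obj A ⟶ A ⊗ Φ.F.obj A :=
  Φ.comult A ≫ (ε.app A ⊗ₘ 𝟙 (Φ.F.obj A))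

end FockConstruction

set_option linter.unusedSectionVars false
section Aux
variable {C : Type u} [Category.{v} C] [HasZeroObject C] [HasZeroMorphisms C]
  [HasBinaryBiproducts C]

theorem cadd_comp {A B D : C} (f g : A ⟶ B) (h : B ⟶ D) :
    cadd f g ≫ h = cadd (f ≫ h) (g ≫ h) := by
  have : biprod.map f g ≫ bcodiag C B ≫ h = biprod.map (f ≫ h) (g ≫ h) ≫ bcodiag C D := by
    apply biprod.hom_ext' <;> simp
  simp only [cadd, Category.assoc, this]

theorem comp_cadd {A B D : C} (f g : B ⟶ D) (h : A ⟶ B) :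
    h ≫ cadd f g = cadd (h ≫ f) (h ≫ g) := by
  have : h ≫ bdiag C B ≫ biprod.map f g = bdiag C A ≫ biprod.map (h ≫ f) (h ≫ g) := by
    apply biprod.hom_ext <;> simp
  simp only [cadd, ← Category.assoc, this]

theorem bdiag_eq (A : C) : bdiag C A = cadd biprod.inl biprod.inr := by
  unfold cadd
  have : biprod.map (biprod.inl : A ⟶ A ⊞ A) (biprod.inr : A ⟶ A ⊞ A) ≫ bcodiag C (A ⊞ A) =
      𝟙 (A ⊞ A) := by
    apply biprod.hom_ext' <;> simp
  rw [this, Category.comp_id]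

end Aux
section Bmu
variable {C : Type u} [Category.{v} C] [HasZeroObject C] [HasZeroMorphisms C]
  [HasBinaryBiproducts C]

/-- Middle-four interchange for binary biproducts. -/
noncomputable def bmu (X₁ X₂ Y₁ Y₂ : C) :
    (X₁ ⊞ X₂) ⊞ (Y₁ ⊞ Y₂) ⟶ (X₁ ⊞ Y₁) ⊞ (X₂ ⊞ Y₂) :=
  (biprod.associator X₁ X₂ (Y₁ ⊞ Y₂)).hom ≫
    biprod.map (𝟙 X₁) ((biprod.associator X₂ Y₁ Y₂).inv ≫
      biprod.map (biprod.braiding X₂ Y₁).hom (𝟙 Y₂) ≫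
      (biprod.associator Y₁ X₂ Y₂).hom) ≫
    (biprod.associator X₁ Y₁ (X₂ ⊞ Y₂)).inv

theorem bmu_inl_fst (X₁ X₂ Y₁ Y₂ : C) :
    biprod.inl ≫ bmu X₁ X₂ Y₁ Y₂ ≫ biprod.fst =
      (biprod.fst : X₁ ⊞ X₂ ⟶ X₁) ≫ biprod.inl := by
  apply biprod.hom_ext' <;> apply biprod.hom_ext <;>
    simp [bmu, biprod.associator, biprod.braiding]

theorem bmu_inl_snd (X₁ X₂ Y₁ Y₂ : C) :
    biprod.inl ≫ bmu X₁ X₂ Y₁ Y₂ ≫ biprod.snd =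
      (biprod.snd : X₁ ⊞ X₂ ⟶ X₂) ≫ biprod.inl := by
  apply biprod.hom_ext' <;> apply biprod.hom_ext <;>
    simp [bmu, biprod.associator, biprod.braiding]

theorem bmu_inr_fst (X₁ X₂ Y₁ Y₂ : C) :
    biprod.inr ≫ bmu X₁ X₂ Y₁ Y₂ ≫ biprod.fst =
      (biprod.fst : Y₁ ⊞ Y₂ ⟶ Y₁) ≫ biprod.inr := by
  apply biprod.hom_ext' <;> apply biprod.hom_ext <;>
    simp [bmu, biprod.associator, biprod.braiding]

theorem bmu_inr_snd (X₁ X₂ Y₁ Y₂ : C) :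
    biprod.inr ≫ bmu X₁ X₂ Y₁ Y₂ ≫ biprod.snd =
      (biprod.snd : Y₁ ⊞ Y₂ ⟶ Y₂) ≫ biprod.inr := by
  apply biprod.hom_ext' <;> apply biprod.hom_ext <;>
    simp [bmu, biprod.associator, biprod.braiding]

theorem codiag_diag (A : C) :
    bcodiag C A ≫ bdiag C A =
      biprod.map (bdiag C A) (bdiag C A) ≫ bmu A A A A ≫
        biprod.map (bcodiag C A) (bcodiag C A) := by
  apply biprod.hom_ext' <;> apply biprod.hom_ext
  · simp only [biprod.inl_map_assoc, Category.assoc, biprod.map_fst,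
      reassoc_of% (bmu_inl_fst A A A A)]
    simp
  · simp only [biprod.inl_map_assoc, Category.assoc, biprod.map_snd,
      reassoc_of% (bmu_inl_snd A A A A)]
    simp
  · simp only [biprod.inr_map_assoc, Category.assoc, biprod.map_fst,
      reassoc_of% (bmu_inr_fst A A A A)]
    simp
  · simp only [biprod.inr_map_assoc, Category.assoc, biprod.map_snd,
      reassoc_of% (bmu_inr_snd A A A A)]
    simp

end Bmu
namespace FockConstruction
variable {C : Type u} [Category.{v} C] [HasZeroObject C] [HasZeroMorphisms C]
  [HasBinaryBiproducts C] [MonoidalCategory C] [SymmetricCategory C] (Φ : FockConstruction C)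

theorem unit_mult (A : C) :
    (Φ.unit A ⊗ₘ 𝟙 (Φ.F.obj A)) ≫ Φ.mult A = (λ_ (Φ.F.obj A)).hom := by
  have hd : biprod.map (0 : (0 : C) ⟶ A) (𝟙 A) ≫ bcodiag C A = biprod.desc 0 (𝟙 A) := by
    apply biprod.hom_ext' <;> simp
  have hn := Φ.φ_natural (0 : (0 : C) ⟶ A) (𝟙 A)
  rw [Φ.F.map_id] at hn
  calc (Φ.unit A ⊗ₘ 𝟙 (Φ.F.obj A)) ≫ Φ.mult A
      = (Φ.φ₀.hom ⊗ₘ 𝟙 (Φ.F.obj A)) ≫ ((Φ.F.map (0 : (0 : C) ⟶ A) ⊗ₘ 𝟙 (Φ.F.obj A)) ≫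
          (Φ.φ A A).hom) ≫ Φ.F.map (bcodiag C A) := by
        simp [unit, mult, tensorHom_comp_tensorHom_assoc]
    _ = (Φ.φ₀.hom ⊗ₘ 𝟙 (Φ.F.obj A)) ≫ (Φ.φ 0 A).hom ≫ Φ.F.map (biprod.desc 0 (𝟙 A)) := by
        rw [hn]; rw [Category.assoc, ← Φ.F.map_comp, hd]
    _ = (λ_ (Φ.F.obj A)).hom := Φ.left_unitality A

theorem mult_unit (A : C) :
    (𝟙 (Φ.F.obj A) ⊗ₘ Φ.unit A) ≫ Φ.mult A = (ρ_ (Φ.F.obj A)).hom := by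
  have hd : biprod.map (𝟙 A) (0 : (0 : C) ⟶ A) ≫ bcodiag C A = biprod.desc (𝟙 A) 0 := by
    apply biprod.hom_ext' <;> simp
  have hn := Φ.φ_natural (𝟙 A) (0 : (0 : C) ⟶ A)
  rw [Φ.F.map_id] at hn
  calc (𝟙 (Φ.F.obj A) ⊗ₘ Φ.unit A) ≫ Φ.mult A
      = (𝟙 (Φ.F.obj A) ⊗ₘ Φ.φ₀.hom) ≫ ((𝟙 (Φ.F.obj A) ⊗ₘ Φ.F.map (0 : (0 : C) ⟶ A)) ≫
          (Φ.φ A A).hom) ≫ Φ.F.map (bcodiag C A) := by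
        simp [unit, mult, tensorHom_comp_tensorHom_assoc]
    _ = (𝟙 (Φ.F.obj A) ⊗ₘ Φ.φ₀.hom) ≫ (Φ.φ A 0).hom ≫ Φ.F.map (biprod.desc (𝟙 A) 0) := by
        rw [hn]; rw [Category.assoc, ← Φ.F.map_comp, hd]
    _ = (ρ_ (Φ.F.obj A)).hom := Φ.right_unitality A

end FockConstruction
namespace FockConstruction
variable {C : Type u} [Category.{v} C] [HasZeroObject C] [HasZeroMorphisms C]
  [HasBinaryBiproducts C] [MonoidalCategory C] [SymmetricCategory C] (Φ : FockConstruction C)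

theorem F_inl (A : C) :
    Φ.F.map (biprod.inl : A ⟶ A ⊞ A) ≫ (Φ.φ A A).inv =
      (ρ_ (Φ.F.obj A)).inv ≫ (𝟙 (Φ.F.obj A) ⊗ₘ Φ.unit A) := by
  -- `desc (𝟙 A) 0 : A ⊞ 0 ⟶ A` is inverse to `inl`
  have h1 : (biprod.inl : A ⟶ A ⊞ (0 : C)) ≫ biprod.desc (𝟙 A) 0 = 𝟙 A := by simp
  have h2 : biprod.desc (𝟙 A) (0 : (0 : C) ⟶ A) ≫ biprod.inl = 𝟙 (A ⊞ (0 : C)) := by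
    apply biprod.hom_ext' <;> simp
    exact (isZero_zero C).eq_of_src _ _
  -- from right unitality : F.map inl(A,0) = ρ⁻¹ ≫ (𝟙 ⊗ₘ φ₀) ≫ φ
  have h3 : Φ.F.map (biprod.inl : A ⟶ A ⊞ (0 : C)) =
      (ρ_ (Φ.F.obj A)).inv ≫ (𝟙 (Φ.F.obj A) ⊗ₘ Φ.φ₀.hom) ≫ (Φ.φ A 0).hom := by
    have := Φ.right_unitality A
    have h4 : Φ.F.map (biprod.desc (𝟙 A) (0 : (0 : C) ⟶ A)) ≫
        Φ.F.map (biprod.inl : A ⟶ A ⊞ (0 : C)) = 𝟙 _ := by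
      rw [← Φ.F.map_comp, h2, Φ.F.map_id]
    calc Φ.F.map (biprod.inl : A ⟶ A ⊞ (0 : C))
        = (ρ_ (Φ.F.obj A)).inv ≫ (ρ_ (Φ.F.obj A)).hom ≫
            Φ.F.map (biprod.inl : A ⟶ A ⊞ (0 : C)) := by simp
      _ = (ρ_ (Φ.F.obj A)).inv ≫ ((𝟙 (Φ.F.obj A) ⊗ₘ Φ.φ₀.hom) ≫ (Φ.φ A 0).hom ≫
            Φ.F.map (biprod.desc (𝟙 A) 0)) ≫ Φ.F.map (biprod.inl : A ⟶ A ⊞ (0 : C)) := by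
          rw [this]
      _ = (ρ_ (Φ.F.obj A)).inv ≫ (𝟙 (Φ.F.obj A) ⊗ₘ Φ.φ₀.hom) ≫ (Φ.φ A 0).hom := by
          simp only [Category.assoc, h4, Category.comp_id]
  -- inl(A,A) = inl(A,0) ≫ map 𝟙 0
  have h5 : (biprod.inl : A ⟶ A ⊞ A) =
      (biprod.inl : A ⟶ A ⊞ (0 : C)) ≫ biprod.map (𝟙 A) (0 : (0 : C) ⟶ A) := by simp
  have h6 := Φ.φ_natural (𝟙 A) (0 : (0 : C) ⟶ A)
  rw [Φ.F.map_id] at h6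
  have h7 : Φ.F.map (biprod.map (𝟙 A) (0 : (0 : C) ⟶ A)) ≫ (Φ.φ A A).inv =
      (Φ.φ A 0).inv ≫ (𝟙 (Φ.F.obj A) ⊗ₘ Φ.F.map (0 : (0 : C) ⟶ A)) := by
    rw [Iso.comp_inv_eq, Category.assoc, h6, Iso.inv_hom_id_assoc]
  rw [h5, Φ.F.map_comp, h3]
  simp only [Category.assoc, h7, Iso.hom_inv_id_assoc]
  rw [tensorHom_comp_tensorHom]
  simp [unit]

theorem F_inr (A : C) :
    Φ.F.map (biprod.inr : A ⟶ A ⊞ A) ≫ (Φ.φ A A).inv =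
      (λ_ (Φ.F.obj A)).inv ≫ (Φ.unit A ⊗ₘ 𝟙 (Φ.F.obj A)) := by
  have h2 : biprod.desc (0 : (0 : C) ⟶ A) (𝟙 A) ≫ biprod.inr = 𝟙 ((0 : C) ⊞ A) := by
    apply biprod.hom_ext' <;> simp
    exact (isZero_zero C).eq_of_src _ _
  have h3 : Φ.F.map (biprod.inr : A ⟶ (0 : C) ⊞ A) =
      (λ_ (Φ.F.obj A)).inv ≫ (Φ.φ₀.hom ⊗ₘ 𝟙 (Φ.F.obj A)) ≫ (Φ.φ 0 A).hom := by
    have := Φ.left_unitality A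
    have h4 : Φ.F.map (biprod.desc (0 : (0 : C) ⟶ A) (𝟙 A)) ≫
        Φ.F.map (biprod.inr : A ⟶ (0 : C) ⊞ A) = 𝟙 _ := by
      rw [← Φ.F.map_comp, h2, Φ.F.map_id]
    calc Φ.F.map (biprod.inr : A ⟶ (0 : C) ⊞ A)
        = (λ_ (Φ.F.obj A)).inv ≫ (λ_ (Φ.F.obj A)).hom ≫
            Φ.F.map (biprod.inr : A ⟶ (0 : C) ⊞ A) := by simp
      _ = (λ_ (Φ.F.obj A)).inv ≫ ((Φ.φ₀.hom ⊗ₘ 𝟙 (Φ.F.obj A)) ≫ (Φ.φ 0 A).hom ≫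
            Φ.F.map (biprod.desc 0 (𝟙 A))) ≫ Φ.F.map (biprod.inr : A ⟶ (0 : C) ⊞ A) := by
          rw [this]
      _ = (λ_ (Φ.F.obj A)).inv ≫ (Φ.φ₀.hom ⊗ₘ 𝟙 (Φ.F.obj A)) ≫ (Φ.φ 0 A).hom := by
          simp only [Category.assoc, h4, Category.comp_id]
  have h5 : (biprod.inr : A ⟶ A ⊞ A) =
      (biprod.inr : A ⟶ (0 : C) ⊞ A) ≫ biprod.map (0 : (0 : C) ⟶ A) (𝟙 A) := by simp
  have h6 := Φ.φ_natural (0 : (0 : C) ⟶ A) (𝟙 A)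
  rw [Φ.F.map_id] at h6
  have h7 : Φ.F.map (biprod.map (0 : (0 : C) ⟶ A) (𝟙 A)) ≫ (Φ.φ A A).inv =
      (Φ.φ 0 A).inv ≫ (Φ.F.map (0 : (0 : C) ⟶ A) ⊗ₘ 𝟙 (Φ.F.obj A)) := by
    rw [Iso.comp_inv_eq, Category.assoc, h6, Iso.inv_hom_id_assoc]
  rw [h5, Φ.F.map_comp, h3]
  simp only [Category.assoc, h7, Iso.hom_inv_id_assoc]
  rw [tensorHom_comp_tensorHom]
  simp [unit]

theorem eta_comult (η : 𝟭 C ⟶ Φ.F) (A : C) :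
    η.app A ≫ Φ.comult A =
      cadd ((ρ_ A).inv ≫ (η.app A ⊗ₘ Φ.unit A)) ((λ_ A).inv ≫ (Φ.unit A ⊗ₘ η.app A)) := by
  have hnat : η.app A ≫ Φ.F.map (bdiag C A) = bdiag C A ≫ η.app (A ⊞ A) := by
    simpa using (η.naturality (bdiag C A)).symm
  have hl : (biprod.inl : A ⟶ A ⊞ A) ≫ η.app (A ⊞ A) = η.app A ≫ Φ.F.map biprod.inl := by
    simpa using η.naturality (biprod.inl : A ⟶ A ⊞ A)
  have hr : (biprod.inr : A ⟶ A ⊞ A) ≫ η.app (A ⊞ A) = η.app A ≫ Φ.F.map biprod.inr := by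
    simpa using η.naturality (biprod.inr : A ⟶ A ⊞ A)
  calc η.app A ≫ Φ.comult A = (η.app A ≫ Φ.F.map (bdiag C A)) ≫ (Φ.φ A A).inv := by
        simp [comult]
    _ = (bdiag C A ≫ η.app (A ⊞ A)) ≫ (Φ.φ A A).inv := by rw [hnat]
    _ = cadd ((biprod.inl : A ⟶ A ⊞ A) ≫ η.app (A ⊞ A) ≫ (Φ.φ A A).inv)
          ((biprod.inr : A ⟶ A ⊞ A) ≫ η.app (A ⊞ A) ≫ (Φ.φ A A).inv) := by
        rw [bdiag_eq A, cadd_comp, cadd_comp]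
        simp only [Category.assoc]
    _ = cadd (η.app A ≫ Φ.F.map (biprod.inl : A ⟶ A ⊞ A) ≫ (Φ.φ A A).inv)
          (η.app A ≫ Φ.F.map (biprod.inr : A ⟶ A ⊞ A) ≫ (Φ.φ A A).inv) := by
        rw [← Category.assoc, hl, ← Category.assoc _ (η.app (A ⊞ A)), hr]
        simp only [Category.assoc]
    _ = cadd ((ρ_ A).inv ≫ (η.app A ⊗ₘ Φ.unit A)) ((λ_ A).inv ≫ (Φ.unit A ⊗ₘ η.app A)) := by
        rw [Φ.F_inl A, Φ.F_inr A]
        congr 1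
        · rw [← Category.assoc, rightUnitor_inv_naturality]
          simp [MonoidalCategory.tensorHom_def]
        · rw [← Category.assoc, leftUnitor_inv_naturality]
          simp [tensorHom_def']

end FockConstruction
namespace FockConstruction
variable {C : Type u} [Category.{v} C] [HasZeroObject C] [HasZeroMorphisms C]
  [HasBinaryBiproducts C] [MonoidalCategory C] [SymmetricCategory C] (Φ : FockConstruction C)

theorem map_right (A : C) {X Y : C} (h : X ⟶ Y) :
    (Φ.φ A X).hom ≫ Φ.F.map (biprod.map (𝟙 A) h) =
      (𝟙 (Φ.F.obj A) ⊗ₘ Φ.F.map h) ≫ (Φ.φ A Y).hom := by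
  rw [← Φ.φ_natural (𝟙 A) h, Φ.F.map_id]

theorem map_left {X Y : C} (h : X ⟶ Y) (A : C) :
    (Φ.φ X A).hom ≫ Φ.F.map (biprod.map h (𝟙 A)) =
      (Φ.F.map h ⊗ₘ 𝟙 (Φ.F.obj A)) ≫ (Φ.φ Y A).hom := by
  rw [← Φ.φ_natural h (𝟙 A), Φ.F.map_id]

theorem assoc_inv (A B D : C) :
    (𝟙 (Φ.F.obj A) ⊗ₘ (Φ.φ B D).hom) ≫ (Φ.φ A (B ⊞ D)).hom ≫
        Φ.F.map (biprod.associator A B D).inv =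
      (α_ (Φ.F.obj A) (Φ.F.obj B) (Φ.F.obj D)).inv ≫
        ((Φ.φ A B).hom ⊗ₘ 𝟙 (Φ.F.obj D)) ≫ (Φ.φ (A ⊞ B) D).hom := by
  have h := Φ.associativity A B D
  calc (𝟙 (Φ.F.obj A) ⊗ₘ (Φ.φ B D).hom) ≫ (Φ.φ A (B ⊞ D)).hom ≫
        Φ.F.map (biprod.associator A B D).inv
      = (α_ _ _ _).inv ≫ ((α_ _ _ _).hom ≫ (𝟙 (Φ.F.obj A) ⊗ₘ (Φ.φ B D).hom) ≫
          (Φ.φ A (B ⊞ D)).hom) ≫ Φ.F.map (biprod.associator A B D).inv := by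
        simp only [Category.assoc, Iso.inv_hom_id_assoc]
    _ = (α_ _ _ _).inv ≫ (((Φ.φ A B).hom ⊗ₘ 𝟙 (Φ.F.obj D)) ≫ (Φ.φ (A ⊞ B) D).hom ≫
          Φ.F.map (biprod.associator A B D).hom) ≫ Φ.F.map (biprod.associator A B D).inv := by
        rw [← h]
    _ = (α_ _ _ _).inv ≫ ((Φ.φ A B).hom ⊗ₘ 𝟙 (Φ.F.obj D)) ≫ (Φ.φ (A ⊞ B) D).hom := by
        simp only [Category.assoc, ← Φ.F.map_comp, Iso.hom_inv_id, Φ.F.map_id,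
          Category.comp_id]

set_option maxHeartbeats 2000000 in
theorem phi_bmu (X₁ X₂ Y₁ Y₂ : C) :
    ((Φ.φ X₁ X₂).hom ⊗ₘ (Φ.φ Y₁ Y₂).hom) ≫ (Φ.φ (X₁ ⊞ X₂) (Y₁ ⊞ Y₂)).hom ≫
        Φ.F.map (bmu X₁ X₂ Y₁ Y₂) =
      tensorμ (Φ.F.obj X₁) (Φ.F.obj X₂) (Φ.F.obj Y₁) (Φ.F.obj Y₂) ≫
        ((Φ.φ X₁ Y₁).hom ⊗ₘ (Φ.φ X₂ Y₂).hom) ≫ (Φ.φ (X₁ ⊞ Y₁) (X₂ ⊞ Y₂)).hom := by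
  have inner : (𝟙 (Φ.F.obj X₂) ⊗ₘ (Φ.φ Y₁ Y₂).hom) ≫ (Φ.φ X₂ (Y₁ ⊞ Y₂)).hom ≫
      Φ.F.map ((biprod.associator X₂ Y₁ Y₂).inv ≫
        biprod.map (biprod.braiding X₂ Y₁).hom (𝟙 Y₂) ≫
        (biprod.associator Y₁ X₂ Y₂).hom) =
      (α_ _ _ _).inv ≫ ((β_ (Φ.F.obj X₂) (Φ.F.obj Y₁)).hom ⊗ₘ 𝟙 (Φ.F.obj Y₂)) ≫
        (α_ _ _ _).hom ≫ (𝟙 (Φ.F.obj Y₁) ⊗ₘ (Φ.φ X₂ Y₂).hom) ≫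
        (Φ.φ Y₁ (X₂ ⊞ Y₂)).hom := by
    rw [Φ.F.map_comp, Φ.F.map_comp]
    calc (𝟙 (Φ.F.obj X₂) ⊗ₘ (Φ.φ Y₁ Y₂).hom) ≫ (Φ.φ X₂ (Y₁ ⊞ Y₂)).hom ≫
        Φ.F.map (biprod.associator X₂ Y₁ Y₂).inv ≫
        Φ.F.map (biprod.map (biprod.braiding X₂ Y₁).hom (𝟙 Y₂)) ≫
        Φ.F.map (biprod.associator Y₁ X₂ Y₂).hom
        = ((𝟙 (Φ.F.obj X₂) ⊗ₘ (Φ.φ Y₁ Y₂).hom) ≫ (Φ.φ X₂ (Y₁ ⊞ Y₂)).hom ≫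
            Φ.F.map (biprod.associator X₂ Y₁ Y₂).inv) ≫
            Φ.F.map (biprod.map (biprod.braiding X₂ Y₁).hom (𝟙 Y₂)) ≫
            Φ.F.map (biprod.associator Y₁ X₂ Y₂).hom := by
          simp only [Category.assoc]
      _ = (α_ _ _ _).inv ≫ ((Φ.φ X₂ Y₁).hom ⊗ₘ 𝟙 (Φ.F.obj Y₂)) ≫
            ((Φ.φ (X₂ ⊞ Y₁) Y₂).hom ≫
            Φ.F.map (biprod.map (biprod.braiding X₂ Y₁).hom (𝟙 Y₂))) ≫
            Φ.F.map (biprod.associator Y₁ X₂ Y₂).hom := by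
          rw [Φ.assoc_inv]; simp only [Category.assoc]
      _ = (α_ _ _ _).inv ≫ (((Φ.φ X₂ Y₁).hom ≫
            Φ.F.map (biprod.braiding X₂ Y₁).hom) ⊗ₘ 𝟙 (Φ.F.obj Y₂)) ≫
            (Φ.φ (Y₁ ⊞ X₂) Y₂).hom ≫
            Φ.F.map (biprod.associator Y₁ X₂ Y₂).hom := by
          rw [Φ.map_left]
          simp only [Category.assoc]
          rw [tensorHom_comp_tensorHom_assoc]
          simp
      _ = (α_ _ _ _).inv ≫ (((β_ (Φ.F.obj X₂) (Φ.F.obj Y₁)).hom ≫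
            (Φ.φ Y₁ X₂).hom) ⊗ₘ 𝟙 (Φ.F.obj Y₂)) ≫
            (Φ.φ (Y₁ ⊞ X₂) Y₂).hom ≫
            Φ.F.map (biprod.associator Y₁ X₂ Y₂).hom := by
          rw [Φ.braided]
      _ = (α_ _ _ _).inv ≫ ((β_ (Φ.F.obj X₂) (Φ.F.obj Y₁)).hom ⊗ₘ 𝟙 (Φ.F.obj Y₂)) ≫
            (((Φ.φ Y₁ X₂).hom ⊗ₘ 𝟙 (Φ.F.obj Y₂)) ≫
            (Φ.φ (Y₁ ⊞ X₂) Y₂).hom ≫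
            Φ.F.map (biprod.associator Y₁ X₂ Y₂).hom) := by
          rw [tensorHom_comp_tensorHom_assoc]; simp
      _ = (α_ _ _ _).inv ≫ ((β_ (Φ.F.obj X₂) (Φ.F.obj Y₁)).hom ⊗ₘ 𝟙 (Φ.F.obj Y₂)) ≫
            (α_ _ _ _).hom ≫ (𝟙 (Φ.F.obj Y₁) ⊗ₘ (Φ.φ X₂ Y₂).hom) ≫
            (Φ.φ Y₁ (X₂ ⊞ Y₂)).hom := by
          rw [Φ.associativity]
  have hsplit : Φ.F.map (bmu X₁ X₂ Y₁ Y₂) =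
      Φ.F.map (biprod.associator X₁ X₂ (Y₁ ⊞ Y₂)).hom ≫
        Φ.F.map (biprod.map (𝟙 X₁) ((biprod.associator X₂ Y₁ Y₂).inv ≫
          biprod.map (biprod.braiding X₂ Y₁).hom (𝟙 Y₂) ≫
          (biprod.associator Y₁ X₂ Y₂).hom)) ≫
        Φ.F.map (biprod.associator X₁ Y₁ (X₂ ⊞ Y₂)).inv := by
    simp only [bmu, Φ.F.map_comp]
  have htsplit : (Φ.φ X₁ X₂).hom ⊗ₘ (Φ.φ Y₁ Y₂).hom =
      (𝟙 (Φ.F.obj X₁ ⊗ Φ.F.obj X₂) ⊗ₘ (Φ.φ Y₁ Y₂).hom) ≫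
        ((Φ.φ X₁ X₂).hom ⊗ₘ 𝟙 (Φ.F.obj (Y₁ ⊞ Y₂))) := by
    rw [tensorHom_comp_tensorHom]; simp
  have hn := associator_naturality (𝟙 (Φ.F.obj X₁)) (𝟙 (Φ.F.obj X₂)) (Φ.φ Y₁ Y₂).hom
  rw [id_tensorHom_id] at hn
  rw [hsplit, htsplit]
  simp only [Category.assoc]
  rw [reassoc_of% (Φ.associativity X₁ X₂ (Y₁ ⊞ Y₂))]
  rw [reassoc_of% (Φ.map_right X₁ ((biprod.associator X₂ Y₁ Y₂).inv ≫
    biprod.map (biprod.braiding X₂ Y₁).hom (𝟙 Y₂) ≫ (biprod.associator Y₁ X₂ Y₂).hom))]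
  rw [reassoc_of% hn]
  simp only [tensorHom_comp_tensorHom_assoc, Category.id_comp, Category.comp_id]
  rw [inner]
  simp only [id_tensor_comp]
  simp only [Category.assoc]
  rw [Φ.assoc_inv X₁ Y₁ (X₂ ⊞ Y₂)]
  simp only [tensorμ, id_tensorHom, tensorHom_id, MonoidalCategory.whiskerLeft_comp,
    Category.assoc]
  rw [associator_inv_naturality_right_assoc]
  rw [← tensorHom_def'_assoc]

end FockConstruction
namespace FockConstruction
variable {C : Type u} [Category.{v} C] [HasZeroObject C] [HasZeroMorphisms C]
  [HasBinaryBiproducts C] [MonoidalCategory C] [SymmetricCategory C] (Φ : FockConstruction C)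

theorem mult_comult (A : C) :
    Φ.mult A ≫ Φ.comult A =
      (Φ.comult A ⊗ₘ Φ.comult A) ≫
        tensorμ (Φ.F.obj A) (Φ.F.obj A) (Φ.F.obj A) (Φ.F.obj A) ≫
        (Φ.mult A ⊗ₘ Φ.mult A) := by
  have h1 := Φ.φ_natural (bdiag C A) (bdiag C A)
  have h2 := Φ.φ_natural (bcodiag C A) (bcodiag C A)
  have h3 := Φ.phi_bmu A A A A
  calc Φ.mult A ≫ Φ.comult A
      = (Φ.φ A A).hom ≫ Φ.F.map (biprod.map (bdiag C A) (bdiag C A)) ≫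
        Φ.F.map (bmu A A A A) ≫ Φ.F.map (biprod.map (bcodiag C A) (bcodiag C A)) ≫
        (Φ.φ A A).inv := by
        simp only [mult, comult, Category.assoc, ← Φ.F.map_comp_assoc, ← codiag_diag]
    _ = (Φ.F.map (bdiag C A) ⊗ₘ Φ.F.map (bdiag C A)) ≫ (Φ.φ (A ⊞ A) (A ⊞ A)).hom ≫
        Φ.F.map (bmu A A A A) ≫ Φ.F.map (biprod.map (bcodiag C A) (bcodiag C A)) ≫
        (Φ.φ A A).inv := by
        rw [← reassoc_of% h1]
    _ = ((Φ.F.map (bdiag C A) ≫ (Φ.φ A A).inv) ⊗ₘ (Φ.F.map (bdiag C A) ≫ (Φ.φ A A).inv)) ≫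
        ((Φ.φ A A).hom ⊗ₘ (Φ.φ A A).hom) ≫ (Φ.φ (A ⊞ A) (A ⊞ A)).hom ≫
        Φ.F.map (bmu A A A A) ≫ Φ.F.map (biprod.map (bcodiag C A) (bcodiag C A)) ≫
        (Φ.φ A A).inv := by
        rw [tensorHom_comp_tensorHom_assoc]; simp
    _ = (Φ.comult A ⊗ₘ Φ.comult A) ≫
        tensorμ (Φ.F.obj A) (Φ.F.obj A) (Φ.F.obj A) (Φ.F.obj A) ≫
        ((Φ.φ A A).hom ⊗ₘ (Φ.φ A A).hom) ≫ (Φ.φ (A ⊞ A) (A ⊞ A)).hom ≫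
        Φ.F.map (biprod.map (bcodiag C A) (bcodiag C A)) ≫ (Φ.φ A A).inv := by
        rw [reassoc_of% h3]; simp only [comult]
    _ = (Φ.comult A ⊗ₘ Φ.comult A) ≫
        tensorμ (Φ.F.obj A) (Φ.F.obj A) (Φ.F.obj A) (Φ.F.obj A) ≫
        ((Φ.φ A A).hom ⊗ₘ (Φ.φ A A).hom) ≫
        (Φ.F.map (bcodiag C A) ⊗ₘ Φ.F.map (bcodiag C A)) ≫
        ((Φ.φ A A).hom ≫ (Φ.φ A A).inv) := by
        rw [← reassoc_of% h2]
    _ = (Φ.comult A ⊗ₘ Φ.comult A) ≫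
        tensorμ (Φ.F.obj A) (Φ.F.obj A) (Φ.F.obj A) (Φ.F.obj A) ≫
        (Φ.mult A ⊗ₘ Φ.mult A) := by
        rw [Iso.hom_inv_id, Category.comp_id, tensorHom_comp_tensorHom]
        simp only [mult]

end FockConstruction
section Coh
variable {C : Type u} [Category.{v} C] [MonoidalCategory C] [SymmetricCategory C]

theorem coh1 (A X Y : C) :
    ((ρ_ A).inv ⊗ₘ 𝟙 (X ⊗ Y)) ≫ tensorμ A (𝟙_ C) X Y ≫ (𝟙 (A ⊗ X) ⊗ₘ (λ_ Y).hom) =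
      (α_ A X Y).inv := by
  have hβ : (β_ (𝟙_ C) X).hom = (λ_ X).hom ≫ (ρ_ X).inv := by
    rw [← braiding_rightUnitor (C := C) X]; simp
  simp only [tensorμ, hβ]
  coherence

theorem coh2 (A X Y : C) :
    ((λ_ A).inv ⊗ₘ 𝟙 (X ⊗ Y)) ≫ tensorμ (𝟙_ C) A X Y ≫ ((λ_ X).hom ⊗ₘ 𝟙 (A ⊗ Y)) =
      (α_ A X Y).inv ≫ ((β_ A X).hom ⊗ₘ 𝟙 Y) ≫ (α_ X A Y).hom := by
  simp only [tensorμ, Category.assoc]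
  calc ((λ_ A).inv ⊗ₘ 𝟙 (X ⊗ Y)) ≫ (α_ (𝟙_ C) A (X ⊗ Y)).hom ≫
        (𝟙_ C ◁ (α_ A X Y).inv) ≫ (𝟙_ C ◁ (β_ A X).hom ▷ Y) ≫
        (𝟙_ C ◁ (α_ X A Y).hom) ≫ (α_ (𝟙_ C) X (A ⊗ Y)).inv ≫ ((λ_ X).hom ⊗ₘ 𝟙 (A ⊗ Y))
      = (λ_ (A ⊗ (X ⊗ Y))).inv ≫
        (𝟙_ C ◁ ((α_ A X Y).inv ≫ ((β_ A X).hom ▷ Y) ≫ (α_ X A Y).hom)) ≫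
        (λ_ (X ⊗ (A ⊗ Y))).hom := by
        simp only [MonoidalCategory.whiskerLeft_comp, Category.assoc]
        coherence
    _ = (α_ A X Y).inv ≫ ((β_ A X).hom ▷ Y) ≫ (α_ X A Y).hom := by
        rw [← leftUnitor_inv_naturality_assoc]
        simp
    _ = (α_ A X Y).inv ≫ ((β_ A X).hom ⊗ₘ 𝟙 Y) ≫ (α_ X A Y).hom := by
        simp [tensorHom_id]

end Coh

namespace FockConstruction
variable {C : Type u} [Category.{v} C] [HasZeroObject C] [HasZeroMorphisms C]
  [HasBinaryBiproducts C] [MonoidalCategory C] [SymmetricCategory C] (Φ : FockConstruction C)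

theorem term1 [TensorCompatible C] (η : 𝟭 C ⟶ Φ.F) (A : C) :
    (((ρ_ A).inv ≫ (η.app A ⊗ₘ Φ.unit A)) ⊗ₘ Φ.comult A) ≫
        tensorμ (Φ.F.obj A) (Φ.F.obj A) (Φ.F.obj A) (Φ.F.obj A) ≫
        (Φ.mult A ⊗ₘ Φ.mult A) =
      (𝟙 A ⊗ₘ Φ.comult A) ≫ (α_ A (Φ.F.obj A) (Φ.F.obj A)).inv ≫
        (Φ.creation η A ⊗ₘ 𝟙 (Φ.F.obj A)) := by
  have hnat := tensorμ_natural (η.app A) (Φ.unit A) (𝟙 (Φ.F.obj A)) (𝟙 (Φ.F.obj A))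
  calc (((ρ_ A).inv ≫ (η.app A ⊗ₘ Φ.unit A)) ⊗ₘ Φ.comult A) ≫
        tensorμ (Φ.F.obj A) (Φ.F.obj A) (Φ.F.obj A) (Φ.F.obj A) ≫
        (Φ.mult A ⊗ₘ Φ.mult A)
      = ((ρ_ A).inv ⊗ₘ Φ.comult A) ≫
        ((η.app A ⊗ₘ Φ.unit A) ⊗ₘ (𝟙 (Φ.F.obj A) ⊗ₘ 𝟙 (Φ.F.obj A))) ≫
        tensorμ (Φ.F.obj A) (Φ.F.obj A) (Φ.F.obj A) (Φ.F.obj A) ≫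
        (Φ.mult A ⊗ₘ Φ.mult A) := by
        rw [tensorHom_comp_tensorHom_assoc, id_tensorHom_id, Category.comp_id]
    _ = ((ρ_ A).inv ⊗ₘ Φ.comult A) ≫ tensorμ A (𝟙_ C) (Φ.F.obj A) (Φ.F.obj A) ≫
        ((η.app A ⊗ₘ 𝟙 (Φ.F.obj A)) ⊗ₘ (Φ.unit A ⊗ₘ 𝟙 (Φ.F.obj A))) ≫
        (Φ.mult A ⊗ₘ Φ.mult A) := by
        rw [reassoc_of% hnat]
    _ = ((ρ_ A).inv ⊗ₘ Φ.comult A) ≫ tensorμ A (𝟙_ C) (Φ.F.obj A) (Φ.F.obj A) ≫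
        (Φ.creation η A ⊗ₘ (λ_ (Φ.F.obj A)).hom) := by
        rw [tensorHom_comp_tensorHom]
        simp only [creation, Φ.unit_mult]
    _ = (𝟙 A ⊗ₘ Φ.comult A) ≫ ((ρ_ A).inv ⊗ₘ 𝟙 (Φ.F.obj A ⊗ Φ.F.obj A)) ≫
        tensorμ A (𝟙_ C) (Φ.F.obj A) (Φ.F.obj A) ≫
        (𝟙 (A ⊗ Φ.F.obj A) ⊗ₘ (λ_ (Φ.F.obj A)).hom) ≫
        (Φ.creation η A ⊗ₘ 𝟙 (Φ.F.obj A)) := by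
        rw [tensorHom_comp_tensorHom_assoc, tensorHom_comp_tensorHom]
        simp
    _ = (𝟙 A ⊗ₘ Φ.comult A) ≫ (α_ A (Φ.F.obj A) (Φ.F.obj A)).inv ≫
        (Φ.creation η A ⊗ₘ 𝟙 (Φ.F.obj A)) := by
        rw [reassoc_of% (coh1 A (Φ.F.obj A) (Φ.F.obj A))]

theorem term2 [TensorCompatible C] (η : 𝟭 C ⟶ Φ.F) (A : C) :
    (((λ_ A).inv ≫ (Φ.unit A ⊗ₘ η.app A)) ⊗ₘ Φ.comult A) ≫
        tensorμ (Φ.F.obj A) (Φ.F.obj A) (Φ.F.obj A) (Φ.F.obj A) ≫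
        (Φ.mult A ⊗ₘ Φ.mult A) =
      (𝟙 A ⊗ₘ Φ.comult A) ≫ (α_ A (Φ.F.obj A) (Φ.F.obj A)).inv ≫
        ((β_ A (Φ.F.obj A)).hom ⊗ₘ 𝟙 (Φ.F.obj A)) ≫
        (α_ (Φ.F.obj A) A (Φ.F.obj A)).hom ≫
        (𝟙 (Φ.F.obj A) ⊗ₘ Φ.creation η A) := by
  have hnat := tensorμ_natural (Φ.unit A) (η.app A) (𝟙 (Φ.F.obj A)) (𝟙 (Φ.F.obj A))
  calc (((λ_ A).inv ≫ (Φ.unit A ⊗ₘ η.app A)) ⊗ₘ Φ.comult A) ≫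
        tensorμ (Φ.F.obj A) (Φ.F.obj A) (Φ.F.obj A) (Φ.F.obj A) ≫
        (Φ.mult A ⊗ₘ Φ.mult A)
      = ((λ_ A).inv ⊗ₘ Φ.comult A) ≫
        ((Φ.unit A ⊗ₘ η.app A) ⊗ₘ (𝟙 (Φ.F.obj A) ⊗ₘ 𝟙 (Φ.F.obj A))) ≫
        tensorμ (Φ.F.obj A) (Φ.F.obj A) (Φ.F.obj A) (Φ.F.obj A) ≫
        (Φ.mult A ⊗ₘ Φ.mult A) := by
        rw [tensorHom_comp_tensorHom_assoc, id_tensorHom_id, Category.comp_id]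
    _ = ((λ_ A).inv ⊗ₘ Φ.comult A) ≫ tensorμ (𝟙_ C) A (Φ.F.obj A) (Φ.F.obj A) ≫
        ((Φ.unit A ⊗ₘ 𝟙 (Φ.F.obj A)) ⊗ₘ (η.app A ⊗ₘ 𝟙 (Φ.F.obj A))) ≫
        (Φ.mult A ⊗ₘ Φ.mult A) := by
        rw [reassoc_of% hnat]
    _ = ((λ_ A).inv ⊗ₘ Φ.comult A) ≫ tensorμ (𝟙_ C) A (Φ.F.obj A) (Φ.F.obj A) ≫
        ((λ_ (Φ.F.obj A)).hom ⊗ₘ Φ.creation η A) := by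
        rw [tensorHom_comp_tensorHom]
        simp only [creation, Φ.unit_mult]
    _ = (𝟙 A ⊗ₘ Φ.comult A) ≫ ((λ_ A).inv ⊗ₘ 𝟙 (Φ.F.obj A ⊗ Φ.F.obj A)) ≫
        tensorμ (𝟙_ C) A (Φ.F.obj A) (Φ.F.obj A) ≫
        ((λ_ (Φ.F.obj A)).hom ⊗ₘ 𝟙 (A ⊗ Φ.F.obj A)) ≫
        (𝟙 (Φ.F.obj A) ⊗ₘ Φ.creation η A) := by
        rw [tensorHom_comp_tensorHom_assoc, tensorHom_comp_tensorHom]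
        simp
    _ = (𝟙 A ⊗ₘ Φ.comult A) ≫ (α_ A (Φ.F.obj A) (Φ.F.obj A)).inv ≫
        ((β_ A (Φ.F.obj A)).hom ⊗ₘ 𝟙 (Φ.F.obj A)) ≫
        (α_ (Φ.F.obj A) A (Φ.F.obj A)).hom ≫
        (𝟙 (Φ.F.obj A) ⊗ₘ Φ.creation η A) := by
        rw [reassoc_of% (coh2 A (Φ.F.obj A) (Φ.F.obj A))]

end FockConstruction
/-- For a Fock-space construction with `η : Id ⟶ F`, the comultiplication
interacts with the creation operator by
`Δ̄_A ∘ a⁺ = ((a⁺ ⊗ₘ id) + (id ⊗ₘ a⁺) ∘ (σ_{A,FA} ⊗ₘ id)) ∘ (id_A ⊗ₘ Δ̄_A)`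
(associators inserted). -/
theorem FockConstruction.comult_creation {C : Type u} [Category.{v} C]
    [HasZeroObject C] [HasZeroMorphisms C] [HasBinaryBiproducts C]
    [MonoidalCategory C] [SymmetricCategory C] [TensorCompatible C]
    (Φ : FockConstruction C) (η : 𝟭 C ⟶ Φ.F) (A : C) :
    Φ.creation η A ≫ Φ.comult A =
      (𝟙 A ⊗ₘ Φ.comult A) ≫ (α_ A (Φ.F.obj A) (Φ.F.obj A)).inv ≫
        cadd (Φ.creation η A ⊗ₘ 𝟙 (Φ.F.obj A))
          (((β_ A (Φ.F.obj A)).hom ⊗ₘ 𝟙 (Φ.F.obj A)) ≫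
            (α_ (Φ.F.obj A) A (Φ.F.obj A)).hom ≫
            (𝟙 (Φ.F.obj A) ⊗ₘ Φ.creation η A)) := by
  have hbi := Φ.mult_comult A
  have hprim := Φ.eta_comult η A
  calc Φ.creation η A ≫ Φ.comult A
      = ((η.app A ≫ Φ.comult A) ⊗ₘ (𝟙 (Φ.F.obj A) ≫ Φ.comult A)) ≫
        tensorμ (Φ.F.obj A) (Φ.F.obj A) (Φ.F.obj A) (Φ.F.obj A) ≫
        (Φ.mult A ⊗ₘ Φ.mult A) := by
        simp only [creation, Category.assoc, hbi]
        rw [tensorHom_comp_tensorHom_assoc]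
    _ = (cadd ((ρ_ A).inv ≫ (η.app A ⊗ₘ Φ.unit A))
          ((λ_ A).inv ≫ (Φ.unit A ⊗ₘ η.app A)) ⊗ₘ Φ.comult A) ≫
        tensorμ (Φ.F.obj A) (Φ.F.obj A) (Φ.F.obj A) (Φ.F.obj A) ≫
        (Φ.mult A ⊗ₘ Φ.mult A) := by
        rw [hprim, Category.id_comp]
    _ = cadd
          ((((ρ_ A).inv ≫ (η.app A ⊗ₘ Φ.unit A)) ⊗ₘ Φ.comult A) ≫
            tensorμ (Φ.F.obj A) (Φ.F.obj A) (Φ.F.obj A) (Φ.F.obj A) ≫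
            (Φ.mult A ⊗ₘ Φ.mult A))
          ((((λ_ A).inv ≫ (Φ.unit A ⊗ₘ η.app A)) ⊗ₘ Φ.comult A) ≫
            tensorμ (Φ.F.obj A) (Φ.F.obj A) (Φ.F.obj A) (Φ.F.obj A) ≫
            (Φ.mult A ⊗ₘ Φ.mult A)) := by
        rw [TensorCompatible.cadd_tensorHom, cadd_comp]
    _ = cadd
          ((𝟙 A ⊗ₘ Φ.comult A) ≫ (α_ A (Φ.F.obj A) (Φ.F.obj A)).inv ≫
            (Φ.creation η A ⊗ₘ 𝟙 (Φ.F.obj A)))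
          ((𝟙 A ⊗ₘ Φ.comult A) ≫ (α_ A (Φ.F.obj A) (Φ.F.obj A)).inv ≫
            (((β_ A (Φ.F.obj A)).hom ⊗ₘ 𝟙 (Φ.F.obj A)) ≫
              (α_ (Φ.F.obj A) A (Φ.F.obj A)).hom ≫
              (𝟙 (Φ.F.obj A) ⊗ₘ Φ.creation η A))) := by
        rw [Φ.term1 η A, Φ.term2 η A]
    _ = (𝟙 A ⊗ₘ Φ.comult A) ≫ (α_ A (Φ.F.obj A) (Φ.F.obj A)).inv ≫
        cadd (Φ.creation η A ⊗ₘ 𝟙 (Φ.F.obj A))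
          (((β_ A (Φ.F.obj A)).hom ⊗ₘ 𝟙 (Φ.F.obj A)) ≫
            (α_ (Φ.F.obj A) A (Φ.F.obj A)).hom ≫
            (𝟙 (Φ.F.obj A) ⊗ₘ Φ.creation η A)) := by
        rw [comp_cadd, comp_cadd]
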